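/- (Duality of the NTW basis with the NTW degrees of freedom.) Let K be a nondegenerate triangle with vertices a₁, a₂, a₃ ∈ ℝ². For all i, m ∈ {1,2,3}: φ_i(a_m) = δ_{im}, φ_i(b_m) = 0, ⨍_{e_m} n_m·∇φ_i = 0; χ_i(a_m) = 0, χ_i(b_m) = δ_{im}, ⨍_{e_m} n_m·∇χ_i = 0; and ψ_i(a_m) = 0, ψ_i(b_m) = 0, ⨍_{e_m} n_m·∇ψ_i = δ_{im}. -/

import Mathlib

open RealInnerProductSpace MeasureTheory

noncomputable section

/-- Barycentric coordinate `λ_i(x) = c_i + ⟪g_i, x⟫` (with constant gradient `g_i`). -/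
def lam (g : Fin 3 → EuclideanSpace ℝ (Fin 2)) (c : Fin 3 → ℝ) (i : Fin 3)
    (x : EuclideanSpace ℝ (Fin 2)) : ℝ := c i + ⟪g i, x⟫

/-- Cubic bubble `b_K = λ₁ λ₂ λ₃`. -/
def bub (g : Fin 3 → EuclideanSpace ℝ (Fin 2)) (c : Fin 3 → ℝ)
    (x : EuclideanSpace ℝ (Fin 2)) : ℝ :=
  lam g c 0 x * lam g c 1 x * lam g c 2 x

/-- NTW vertex basis function
`φ_i = λ_i(2λ_i − 1) − 6 b_K (2λ_i − 1) + 6 b_K Σ_{j≠i} ((∇λ_i·∇λ_j)/‖∇λ_j‖²)(2λ_j − 1)`. -/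
def phi (g : Fin 3 → EuclideanSpace ℝ (Fin 2)) (c : Fin 3 → ℝ) (i : Fin 3)
    (x : EuclideanSpace ℝ (Fin 2)) : ℝ :=
  lam g c i x * (2 * lam g c i x - 1) - 6 * bub g c x * (2 * lam g c i x - 1)
    + 6 * bub g c x *
      ∑ j ∈ Finset.univ.erase i, (⟪g i, g j⟫ / ‖g j‖ ^ 2) * (2 * lam g c j x - 1)

/-- NTW midpoint basis function `χ_i = 4 λ_j λ_k + 12 b_K (1 − 4λ_i)`. -/
def chi (g : Fin 3 → EuclideanSpace ℝ (Fin 2)) (c : Fin 3 → ℝ) (i : Fin 3)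
    (x : EuclideanSpace ℝ (Fin 2)) : ℝ :=
  4 * lam g c (i + 1) x * lam g c (i + 2) x + 12 * bub g c x * (1 - 4 * lam g c i x)

/-- NTW normal-moment basis function `ψ_i = 6 b_K (2λ_i − 1)/‖∇λ_i‖`. -/
def psi (g : Fin 3 → EuclideanSpace ℝ (Fin 2)) (c : Fin 3 → ℝ) (i : Fin 3)
    (x : EuclideanSpace ℝ (Fin 2)) : ℝ :=
  6 * bub g c x * (2 * lam g c i x - 1) / ‖g i‖

/-- Affine relative `φ̃_i = λ_i(2λ_i − 1) + 6 b_K (1 − λ_i)`. -/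
def phiT (g : Fin 3 → EuclideanSpace ℝ (Fin 2)) (c : Fin 3 → ℝ) (i : Fin 3)
    (x : EuclideanSpace ℝ (Fin 2)) : ℝ :=
  lam g c i x * (2 * lam g c i x - 1) + 6 * bub g c x * (1 - lam g c i x)

/-- Affine relative `ψ̃_i = 6 b_K (2λ_i − 1)`. -/
def psiT (g : Fin 3 → EuclideanSpace ℝ (Fin 2)) (c : Fin 3 → ℝ) (i : Fin 3)
    (x : EuclideanSpace ℝ (Fin 2)) : ℝ :=
  6 * bub g c x * (2 * lam g c i x - 1)

/-- Midpoint `b_i = (a_j + a_k)/2` of the edge `e_i` opposite the vertex `a_i`. -/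
def emid (a : Fin 3 → EuclideanSpace ℝ (Fin 2)) (i : Fin 3) : EuclideanSpace ℝ (Fin 2) :=
  (1 / 2 : ℝ) • (a (i + 1) + a (i + 2))

/-- Edge average `⨍_{e_i} f = ∫₀¹ f(a_j + t(a_k − a_j)) dt`. -/
def edgeAvg (a : Fin 3 → EuclideanSpace ℝ (Fin 2)) (i : Fin 3)
    (f : EuclideanSpace ℝ (Fin 2) → ℝ) : ℝ :=
  ∫ t in (0 : ℝ)..1, f (a (i + 1) + t • (a (i + 2) - a (i + 1)))

/-- Outward unit normal `n_i = −∇λ_i/‖∇λ_i‖` of the edge `e_i`. -/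
def nvec (g : Fin 3 → EuclideanSpace ℝ (Fin 2)) (i : Fin 3) : EuclideanSpace ℝ (Fin 2) :=
  -(‖g i‖⁻¹ • g i)

/-! ### Auxiliary machinery -/

section NTWAux

variable (g : Fin 3 → EuclideanSpace ℝ (Fin 2)) (c : Fin 3 → ℝ)

lemma integral_cubic (p q r s : ℝ) :
    ∫ t in (0:ℝ)..1, (p + q * t + r * t ^ 2 + s * t ^ 3) = p + q / 2 + r / 3 + s / 4 := by
  have key : ∀ t : ℝ, HasDerivAt
      (fun u : ℝ => p * u ^ 1 + q / 2 * u ^ 2 + (r / 3 * u ^ 3 + s / 4 * u ^ 4))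
      (p + q * t + r * t ^ 2 + s * t ^ 3) t := by
    intro t
    have h := (((hasDerivAt_pow 1 t).const_mul p).fun_add ((hasDerivAt_pow 2 t).const_mul (q/2))).fun_add
      (((hasDerivAt_pow 3 t).const_mul (r/3)).fun_add ((hasDerivAt_pow 4 t).const_mul (s/4)))
    refine h.congr_deriv ?_
    push_cast
    norm_num
    ring
  rw [intervalIntegral.integral_eq_sub_of_hasDerivAt (fun t _ => key t)
    ((by continuity :
      Continuous fun t : ℝ => p + q * t + r * t ^ 2 + s * t ^ 3).intervalIntegrable 0 1)]
  norm_num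
  ring

lemma hasFDerivAt_lam (i : Fin 3) (x : EuclideanSpace ℝ (Fin 2)) :
    HasFDerivAt (lam g c i) (innerSL ℝ (g i)) x := by
  have h := ((innerSL ℝ (g i)).hasFDerivAt (x := x)).const_add (c i)
  exact h

/-- The (constant-coefficient-in-`y`) Fréchet derivative of the bubble. -/
def dbubCLM (y : EuclideanSpace ℝ (Fin 2)) : EuclideanSpace ℝ (Fin 2) →L[ℝ] ℝ :=
  (lam g c 0 y * lam g c 1 y) • innerSL ℝ (g 2)
    + lam g c 2 y • (lam g c 0 y • innerSL ℝ (g 1) + lam g c 1 y • innerSL ℝ (g 0))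

/-- Scalar form of the directional derivative of the bubble. -/
def dbub (y v : EuclideanSpace ℝ (Fin 2)) : ℝ :=
  lam g c 1 y * lam g c 2 y * ⟪g 0, v⟫ + lam g c 0 y * lam g c 2 y * ⟪g 1, v⟫
    + lam g c 0 y * lam g c 1 y * ⟪g 2, v⟫

lemma dbubCLM_apply (y v : EuclideanSpace ℝ (Fin 2)) :
    dbubCLM g c y v = dbub g c y v := by
  simp only [dbubCLM, dbub, ContinuousLinearMap.add_apply, ContinuousLinearMap.smul_apply,
    innerSL_apply_apply, smul_eq_mul]
  ring

lemma hasFDerivAt_bub (y : EuclideanSpace ℝ (Fin 2)) :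
    HasFDerivAt (bub g c) (dbubCLM g c y) y :=
  ((hasFDerivAt_lam g c 0 y).mul (hasFDerivAt_lam g c 1 y)).mul (hasFDerivAt_lam g c 2 y)

lemma sum_erase_fin3 (f : Fin 3 → ℝ) (i : Fin 3) :
    ∑ j ∈ Finset.univ.erase i, f j = f (i + 1) + f (i + 2) := by
  rw [Finset.sum_erase_eq_sub (Finset.mem_univ i), Fin.sum_univ_three]
  have h : i = 0 ∨ i = 1 ∨ i = 2 := by omega
  rcases h with rfl | rfl | rfl <;> simp only [Fin.reduceAdd] <;> ring

lemma bub_perm (m : Fin 3) (y : EuclideanSpace ℝ (Fin 2)) :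
    bub g c y = lam g c m y * lam g c (m+1) y * lam g c (m+2) y := by
  have h : m = 0 ∨ m = 1 ∨ m = 2 := by omega
  rcases h with rfl | rfl | rfl <;> simp only [bub, Fin.reduceAdd] <;> ring

lemma dbub_perm (m : Fin 3) (y v : EuclideanSpace ℝ (Fin 2)) :
    dbub g c y v = lam g c (m+1) y * lam g c (m+2) y * ⟪g m, v⟫
      + lam g c m y * lam g c (m+2) y * ⟪g (m+1), v⟫
      + lam g c m y * lam g c (m+1) y * ⟪g (m+2), v⟫ := by
  have h : m = 0 ∨ m = 1 ∨ m = 2 := by omega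
  rcases h with rfl | rfl | rfl <;> simp only [dbub, Fin.reduceAdd] <;> ring

lemma fderiv_psi_apply (i : Fin 3) (y v : EuclideanSpace ℝ (Fin 2)) :
    fderiv ℝ (psi g c i) y v =
      (12 * bub g c y * ⟪g i, v⟫ + 6 * (2 * lam g c i y - 1) * dbub g c y v) / ‖g i‖ := by
  have h2l : HasFDerivAt (fun x => 2 * lam g c i x - 1) ((2:ℝ) • innerSL ℝ (g i)) y :=
    ((hasFDerivAt_lam g c i y).const_mul 2).sub_const 1
  have h : HasFDerivAt (psi g c i)
      ((‖g i‖⁻¹ : ℝ) • ((6 * bub g c y) • ((2:ℝ) • innerSL ℝ (g i))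
        + (2 * lam g c i y - 1) • ((6:ℝ) • dbubCLM g c y))) y := by
    have := ((((hasFDerivAt_bub g c y).const_mul 6).fun_mul h2l).mul_const (‖g i‖⁻¹ : ℝ))
    exact this
  rw [h.fderiv]
  simp only [ContinuousLinearMap.add_apply, ContinuousLinearMap.smul_apply, innerSL_apply_apply,
    smul_eq_mul, dbubCLM_apply, div_eq_mul_inv]
  ring

lemma fderiv_chi_apply (i : Fin 3) (y v : EuclideanSpace ℝ (Fin 2)) :
    fderiv ℝ (chi g c i) y v =
      4 * lam g c (i+1) y * ⟪g (i+2), v⟫ + 4 * lam g c (i+2) y * ⟪g (i+1), v⟫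
        + 12 * (1 - 4 * lam g c i y) * dbub g c y v - 48 * bub g c y * ⟪g i, v⟫ := by
  have h : HasFDerivAt (chi g c i)
      (((4 * lam g c (i+1) y) • innerSL ℝ (g (i+2))
          + lam g c (i+2) y • ((4:ℝ) • innerSL ℝ (g (i+1))))
        + ((12 * bub g c y) • (-((4:ℝ) • innerSL ℝ (g i)))
          + (1 - 4 * lam g c i y) • ((12:ℝ) • dbubCLM g c y))) y := by
    exact ((((hasFDerivAt_lam g c (i+1) y).const_mul 4).mul (hasFDerivAt_lam g c (i+2) y)).add
      (((hasFDerivAt_bub g c y).const_mul 12).mul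
        (((hasFDerivAt_lam g c i y).const_mul 4).const_sub 1)))
  rw [h.fderiv]
  simp only [ContinuousLinearMap.add_apply, ContinuousLinearMap.smul_apply,
    ContinuousLinearMap.neg_apply, innerSL_apply_apply, smul_eq_mul, dbubCLM_apply]
  ring

lemma fderiv_phi_apply (i : Fin 3) (y v : EuclideanSpace ℝ (Fin 2)) :
    fderiv ℝ (phi g c i) y v =
      (4 * lam g c i y - 1) * ⟪g i, v⟫ - 12 * bub g c y * ⟪g i, v⟫
        - 6 * (2 * lam g c i y - 1) * dbub g c y v
        + 12 * bub g c y * ((⟪g i, g (i+1)⟫ / ‖g (i+1)‖ ^ 2) * ⟪g (i+1), v⟫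
            + (⟪g i, g (i+2)⟫ / ‖g (i+2)‖ ^ 2) * ⟪g (i+2), v⟫)
        + 6 * ((⟪g i, g (i+1)⟫ / ‖g (i+1)‖ ^ 2) * (2 * lam g c (i+1) y - 1)
            + (⟪g i, g (i+2)⟫ / ‖g (i+2)‖ ^ 2) * (2 * lam g c (i+2) y - 1)) * dbub g c y v := by
  have h2l : ∀ j : Fin 3, HasFDerivAt (fun x => 2 * lam g c j x - 1)
      ((2:ℝ) • innerSL ℝ (g j)) y :=
    fun j => ((hasFDerivAt_lam g c j y).const_mul 2).sub_const 1
  have hS : HasFDerivAt (fun x => ∑ j ∈ Finset.univ.erase i,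
      (⟪g i, g j⟫ / ‖g j‖ ^ 2) * (2 * lam g c j x - 1))
      (∑ j ∈ Finset.univ.erase i, (⟪g i, g j⟫ / ‖g j‖ ^ 2) • ((2:ℝ) • innerSL ℝ (g j))) y :=
    HasFDerivAt.fun_sum fun j _ => (h2l j).const_mul _
  have h : HasFDerivAt (phi g c i)
      ((((lam g c i y) • ((2:ℝ) • innerSL ℝ (g i)) + (2 * lam g c i y - 1) • innerSL ℝ (g i))
        - ((6 * bub g c y) • ((2:ℝ) • innerSL ℝ (g i))
            + (2 * lam g c i y - 1) • ((6:ℝ) • dbubCLM g c y)))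
        + ((6 * bub g c y) • (∑ j ∈ Finset.univ.erase i,
              (⟪g i, g j⟫ / ‖g j‖ ^ 2) • ((2:ℝ) • innerSL ℝ (g j)))
          + (∑ j ∈ Finset.univ.erase i, (⟪g i, g j⟫ / ‖g j‖ ^ 2) * (2 * lam g c j y - 1)) •
              ((6:ℝ) • dbubCLM g c y))) y :=
    (((hasFDerivAt_lam g c i y).mul (h2l i)).sub
      (((hasFDerivAt_bub g c y).const_mul 6).mul (h2l i))).add
      (((hasFDerivAt_bub g c y).const_mul 6).mul hS)
  rw [h.fderiv]
  simp only [ContinuousLinearMap.add_apply, ContinuousLinearMap.sub_apply,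
    ContinuousLinearMap.smul_apply, ContinuousLinearMap.sum_apply, innerSL_apply_apply,
    smul_eq_mul, dbubCLM_apply, sum_erase_fin3]
  ring

end NTWAux


set_option maxHeartbeats 2000000 in
/-- Duality of the NTW basis functions with the NTW degrees of freedom: for a
nondegenerate triangle with vertices `a₁, a₂, a₃` and all `i, m`,
`φ_i(a_m) = δ_{im}`, `φ_i(b_m) = 0`, `⨍_{e_m} n_m·∇φ_i = 0`;
`χ_i(a_m) = 0`, `χ_i(b_m) = δ_{im}`, `⨍_{e_m} n_m·∇χ_i = 0`;
`ψ_i(a_m) = 0`, `ψ_i(b_m) = 0`, `⨍_{e_m} n_m·∇ψ_i = δ_{im}`. -/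
theorem ntw_basis_duality
    (a g : Fin 3 → EuclideanSpace ℝ (Fin 2)) (c : Fin 3 → ℝ)
    (hind : AffineIndependent ℝ a)
    (hlam : ∀ i m : Fin 3, lam g c i (a m) = if i = m then 1 else 0) :
    ∀ i m : Fin 3,
      phi g c i (a m) = (if i = m then 1 else 0) ∧
      phi g c i (emid a m) = 0 ∧
      edgeAvg a m (fun y => fderiv ℝ (phi g c i) y (nvec g m)) = 0 ∧
      chi g c i (a m) = 0 ∧
      chi g c i (emid a m) = (if i = m then 1 else 0) ∧
      edgeAvg a m (fun y => fderiv ℝ (chi g c i) y (nvec g m)) = 0 ∧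
      psi g c i (a m) = 0 ∧
      psi g c i (emid a m) = 0 ∧
      edgeAvg a m (fun y => fderiv ℝ (psi g c i) y (nvec g m)) = (if i = m then 1 else 0) := by
  classical
  have d1 : ∀ k : Fin 3, k + 1 ≠ k := by decide
  have d2 : ∀ k : Fin 3, k + 2 ≠ k := by decide
  have d3 : ∀ k : Fin 3, k ≠ k + 1 := by decide
  have d4 : ∀ k : Fin 3, k ≠ k + 2 := by decide
  have d5 : ∀ k : Fin 3, k + 1 ≠ k + 2 := by decide
  have d6 : ∀ k : Fin 3, k + 2 ≠ k + 1 := by decide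
  have i11 : ∀ k : Fin 3, k + 1 + 1 = k + 2 := by decide
  have i12 : ∀ k : Fin 3, k + 1 + 2 = k := by decide
  have i21 : ∀ k : Fin 3, k + 2 + 1 = k := by decide
  have i22 : ∀ k : Fin 3, k + 2 + 2 = k + 1 := by decide
  have tri : ∀ i m : Fin 3, i = m ∨ i = m + 1 ∨ i = m + 2 := by decide
  have e : ∀ j r : Fin 3, ⟪g j, a r⟫ = (if j = r then (1:ℝ) else 0) - c j := by
    intro j r
    have h := hlam j r
    simp only [lam] at h
    linarith
  have hgne : ∀ j : Fin 3, g j ≠ 0 := by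
    intro j h
    have h1 := e j j
    have h2 := e j (j + 1)
    rw [h, inner_zero_left] at h1 h2
    rw [if_pos rfl] at h1
    rw [if_neg (d3 j)] at h2
    linarith
  have hnorm : ∀ j : Fin 3, ‖g j‖ ≠ 0 := fun j => norm_ne_zero_iff.2 (hgne j)
  have hGa : ∀ r : Fin 3, ⟪g 0 + g 1 + g 2, a r⟫ = 1 - (c 0 + c 1 + c 2) := by
    intro r
    simp only [inner_add_left, e]
    have hr : r = 0 ∨ r = 1 ∨ r = 2 := by omega
    rcases hr with rfl | rfl | rfl <;> simp <;> ring
  have hG : g 0 + g 1 + g 2 = 0 := by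
    have hli := (affineIndependent_iff_linearIndependent_vsub ℝ a 0).1 hind
    have hcard : Fintype.card {x : Fin 3 // x ≠ 0}
        = Module.finrank ℝ (EuclideanSpace ℝ (Fin 2)) := by
      simp [finrank_euclideanSpace]
    haveI : Nonempty {x : Fin 3 // x ≠ 0} := ⟨⟨1, by decide⟩⟩
    have hsp := hli.span_eq_top_of_card_eq_finrank hcard
    have key : ∀ v, ⟪g 0 + g 1 + g 2, v⟫ = 0 := by
      intro v
      have hv : v ∈ Submodule.span ℝ
          (Set.range fun i : {x : Fin 3 // x ≠ 0} => a ↑i -ᵥ a 0) := by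
        rw [hsp]; trivial
      induction hv using Submodule.span_induction with
      | mem x hx =>
          obtain ⟨j, rfl⟩ := hx
          show ⟪g 0 + g 1 + g 2, a ↑j -ᵥ a 0⟫ = 0
          rw [vsub_eq_sub, inner_sub_right, hGa, hGa]
          ring
      | zero => simp
      | add x y _ _ hx hy => rw [inner_add_right, hx, hy]; ring
      | smul r x _ hx => rw [real_inner_smul_right, hx]; ring
    exact inner_self_eq_zero.1 (key _)
  have hsum : ∀ k : Fin 3, g k + g (k+1) + g (k+2) = 0 := by
    intro k
    have hk : k = 0 ∨ k = 1 ∨ k = 2 := by omega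
    rcases hk with rfl | rfl | rfl <;> simp only [Fin.reduceAdd] <;>
      first
        | exact hG
        | (rw [← hG]; abel)
  have hQ : ∀ k : Fin 3, ⟪g k, g k⟫ + ⟪g (k+1), g k⟫ + ⟪g (k+2), g k⟫ = 0 := by
    intro k
    have h : ⟪g k + g (k+1) + g (k+2), g k⟫ = 0 := by rw [hsum k, inner_zero_left]
    rw [inner_add_left, inner_add_left] at h
    linarith
  have hbv : ∀ r, bub g c (a r) = 0 := by
    intro r
    have hr : r = 0 ∨ r = 1 ∨ r = 2 := by omega
    rcases hr with rfl | rfl | rfl <;> simp [bub, hlam]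
  have hle : ∀ j r : Fin 3, lam g c j (emid a r)
      = ((if j = r+1 then (1:ℝ) else 0) + (if j = r+2 then 1 else 0)) / 2 := by
    intro j r
    simp only [lam, emid, inner_add_right, real_inner_smul_right, e]
    ring
  have hbe : ∀ r, bub g c (emid a r) = 0 := by
    intro r
    rw [bub_perm g c r, hle r r, if_neg (d3 r), if_neg (d4 r)]
    ring
  have hedge : ∀ (j m : Fin 3) (t : ℝ),
      lam g c j (a (m+1) + t • (a (m+2) - a (m+1)))
        = (if j = m+1 then 1 else 0)
          + t * ((if j = m+2 then (1:ℝ) else 0) - (if j = m+1 then 1 else 0)) := by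
    intro j m t
    simp only [lam, inner_add_right, real_inner_smul_right, inner_sub_right, e]
    ring
  intro i m
  have hlmE : ∀ t : ℝ, lam g c m (a (m+1) + t • (a (m+2) - a (m+1))) = 0 := by
    intro t; rw [hedge m m t, if_neg (d3 m), if_neg (d4 m)]; ring
  have hl1E : ∀ t : ℝ, lam g c (m+1) (a (m+1) + t • (a (m+2) - a (m+1))) = 1 - t := by
    intro t; rw [hedge (m+1) m t, if_pos rfl, if_neg (d5 m)]; ring
  have hl2E : ∀ t : ℝ, lam g c (m+2) (a (m+1) + t • (a (m+2) - a (m+1))) = t := by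
    intro t; rw [hedge (m+2) m t, if_pos rfl, if_neg (d6 m)]; ring
  have hbE : ∀ t : ℝ, bub g c (a (m+1) + t • (a (m+2) - a (m+1))) = 0 := by
    intro t; rw [bub_perm g c m, hlmE t]; ring
  have hni : ∀ j : Fin 3, ⟪g j, nvec g m⟫ = -(‖g m‖⁻¹ * ⟪g j, g m⟫) := by
    intro j; simp only [nvec, inner_neg_right, real_inner_smul_right]
  have hs : ∀ k : Fin 3, ⟪g k, g k⟫ = ‖g k‖ * ‖g k‖ := fun k =>
    real_inner_self_eq_norm_mul_norm (g k)
  have hinv : ∀ k : Fin 3, ‖g k‖ * ‖g k‖⁻¹ = 1 := fun k => mul_inv_cancel₀ (hnorm k)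
  have hnm : ⟪g m, nvec g m⟫ = -‖g m‖ := by
    rw [hni m, hs m, ← mul_assoc, inv_mul_cancel₀ (hnorm m), one_mul]
  have hdbE : ∀ t : ℝ, dbub g c (a (m+1) + t • (a (m+2) - a (m+1))) (nvec g m)
      = (1 - t) * t * -‖g m‖ := by
    intro t; rw [dbub_perm g c m, hlmE t, hl1E t, hl2E t, hnm]; ring
  refine ⟨?_, ?_, ?_, ?_, ?_, ?_, ?_, ?_, ?_⟩
  · -- φ at vertices
    rcases eq_or_ne i m with rfl | h
    · simp [phi, hbv, hlam]
      norm_num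
    · simp [phi, hbv, hlam, h]
  · -- φ at midpoints
    rcases tri i m with rfl | rfl | rfl <;>
      simp [phi, hbe, hle, d3, d4, d5, d6, i11, i12, i21, i22] <;> norm_num
  · -- φ edge moments
    rcases tri i m with h | rfl | rfl
    · rw [h]
      rw [edgeAvg, intervalIntegral.integral_congr (g := fun t : ℝ =>
        ‖g m‖⁻¹ * ⟪g m, g m⟫
          + ((6 + 6 * (⟪g m, g (m+1)⟫ / ‖g (m+1)‖ ^ 2)
              - 6 * (⟪g m, g (m+2)⟫ / ‖g (m+2)‖ ^ 2)) * -‖g m‖) * t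
          + ((-6 - 18 * (⟪g m, g (m+1)⟫ / ‖g (m+1)‖ ^ 2)
              + 18 * (⟪g m, g (m+2)⟫ / ‖g (m+2)‖ ^ 2)) * -‖g m‖) * t ^ 2
          + ((12 * (⟪g m, g (m+1)⟫ / ‖g (m+1)‖ ^ 2)
              - 12 * (⟪g m, g (m+2)⟫ / ‖g (m+2)‖ ^ 2)) * -‖g m‖) * t ^ 3)
        (fun t _ => by
          simp only [fderiv_phi_apply, hbE, hdbE, hlmE, hl1E, hl2E, hni]
          ring), integral_cubic]
      linear_combination ‖g m‖⁻¹ * hs m + ‖g m‖ * hinv m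
    · rw [edgeAvg, intervalIntegral.integral_congr (g := fun t : ℝ =>
        3 * -(‖g m‖⁻¹ * ⟪g (m+1), g m⟫)
          + (-4 * -(‖g m‖⁻¹ * ⟪g (m+1), g m⟫)
            + (-6 - 6 * (⟪g (m+1), g (m+2)⟫ / ‖g (m+2)‖ ^ 2)
              - 6 * (⟪g (m+1), g m⟫ / ‖g m‖ ^ 2)) * -‖g m‖) * t
          + ((18 + 18 * (⟪g (m+1), g (m+2)⟫ / ‖g (m+2)‖ ^ 2)
              + 6 * (⟪g (m+1), g m⟫ / ‖g m‖ ^ 2)) * -‖g m‖) * t ^ 2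
          + ((-12 - 12 * (⟪g (m+1), g (m+2)⟫ / ‖g (m+2)‖ ^ 2)) * -‖g m‖) * t ^ 3)
        (fun t _ => by
          simp only [fderiv_phi_apply, hbE, hdbE, hlmE, hl1E, hl2E, hni, i11, i12]
          ring), integral_cubic]
      linear_combination (⟪g (m+1), g m⟫ * ‖g m‖⁻¹) * hinv m
    · rw [edgeAvg, intervalIntegral.integral_congr (g := fun t : ℝ =>
        -(-(‖g m‖⁻¹ * ⟪g (m+2), g m⟫))
          + (4 * -(‖g m‖⁻¹ * ⟪g (m+2), g m⟫)
            + (6 - 6 * (⟪g (m+2), g m⟫ / ‖g m‖ ^ 2)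
              + 6 * (⟪g (m+2), g (m+1)⟫ / ‖g (m+1)‖ ^ 2)) * -‖g m‖) * t
          + ((-18 + 6 * (⟪g (m+2), g m⟫ / ‖g m‖ ^ 2)
              - 18 * (⟪g (m+2), g (m+1)⟫ / ‖g (m+1)‖ ^ 2)) * -‖g m‖) * t ^ 2
          + ((12 + 12 * (⟪g (m+2), g (m+1)⟫ / ‖g (m+1)‖ ^ 2)) * -‖g m‖) * t ^ 3)
        (fun t _ => by
          simp only [fderiv_phi_apply, hbE, hdbE, hlmE, hl1E, hl2E, hni, i21, i22]
          ring), integral_cubic]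
      linear_combination (⟪g (m+2), g m⟫ * ‖g m‖⁻¹) * hinv m
  · -- χ at vertices
    rcases tri i m with rfl | rfl | rfl <;>
      simp [chi, hbv, hlam, d1, d2, d3, d4, d5, d6, i11, i12, i21, i22]
  · -- χ at midpoints
    rcases tri i m with rfl | rfl | rfl <;>
      simp [chi, hbe, hle, d1, d2, d3, d4, d5, d6, i11, i12, i21, i22] <;> norm_num
  · -- χ edge moments
    rcases tri i m with h | rfl | rfl
    · rw [h]
      rw [edgeAvg, intervalIntegral.integral_congr (g := fun t : ℝ =>
        4 * -(‖g m‖⁻¹ * ⟪g (m+2), g m⟫)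
          + (4 * -(‖g m‖⁻¹ * ⟪g (m+1), g m⟫) - 4 * -(‖g m‖⁻¹ * ⟪g (m+2), g m⟫)
            + 12 * -‖g m‖) * t
          + (-12 * -‖g m‖) * t ^ 2 + 0 * t ^ 3)
        (fun t _ => by
          simp only [fderiv_chi_apply, hbE, hdbE, hlmE, hl1E, hl2E, hni]
          ring), integral_cubic]
      linear_combination (-2 * ‖g m‖⁻¹) * hQ m + (2 * ‖g m‖⁻¹) * hs m + (2 * ‖g m‖) * hinv m
    · rw [edgeAvg, intervalIntegral.integral_congr (g := fun t : ℝ =>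
        0 + (4 * -(‖g m‖⁻¹ * ⟪g m, g m⟫) + 36 * ‖g m‖) * t
          + (-84 * ‖g m‖) * t ^ 2 + (48 * ‖g m‖) * t ^ 3)
        (fun t _ => by
          simp only [fderiv_chi_apply, hbE, hdbE, hlmE, hl1E, hl2E, hni, i11, i12]
          ring), integral_cubic]
      linear_combination (-2 * ‖g m‖⁻¹) * hs m + (-2 * ‖g m‖) * hinv m
    · rw [edgeAvg, intervalIntegral.integral_congr (g := fun t : ℝ =>
        4 * -(‖g m‖⁻¹ * ⟪g m, g m⟫)
          + (-4 * -(‖g m‖⁻¹ * ⟪g m, g m⟫) - 12 * ‖g m‖) * t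
          + (60 * ‖g m‖) * t ^ 2 + (-48 * ‖g m‖) * t ^ 3)
        (fun t _ => by
          simp only [fderiv_chi_apply, hbE, hdbE, hlmE, hl1E, hl2E, hni, i21, i22]
          ring), integral_cubic]
      linear_combination (-2 * ‖g m‖⁻¹) * hs m + (-2 * ‖g m‖) * hinv m
  · -- ψ at vertices
    simp [psi, hbv]
  · -- ψ at midpoints
    simp [psi, hbe]
  · -- ψ edge moments
    rcases tri i m with h | rfl | rfl
    · rw [h]
      rw [edgeAvg, intervalIntegral.integral_congr (g := fun t : ℝ =>
        0 + (6 * (‖g m‖ / ‖g m‖)) * t + (-(6 * (‖g m‖ / ‖g m‖))) * t ^ 2 + 0 * t ^ 3)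
        (fun t _ => by
          simp only [fderiv_psi_apply, hbE, hdbE, hlmE, hni]
          ring), integral_cubic]
      rw [if_pos rfl]
      rw [div_self (hnorm m)]
      norm_num
    · rw [edgeAvg, intervalIntegral.integral_congr (g := fun t : ℝ =>
        0 + (-6 * (‖g m‖ / ‖g (m+1)‖)) * t + (18 * (‖g m‖ / ‖g (m+1)‖)) * t ^ 2
          + (-12 * (‖g m‖ / ‖g (m+1)‖)) * t ^ 3)
        (fun t _ => by
          simp only [fderiv_psi_apply, hbE, hdbE, hl1E, hni]
          ring), integral_cubic]
      rw [if_neg (d1 m)]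
      ring
    · rw [edgeAvg, intervalIntegral.integral_congr (g := fun t : ℝ =>
        0 + (6 * (‖g m‖ / ‖g (m+2)‖)) * t + (-18 * (‖g m‖ / ‖g (m+2)‖)) * t ^ 2
          + (12 * (‖g m‖ / ‖g (m+2)‖)) * t ^ 3)
        (fun t _ => by
          simp only [fderiv_psi_apply, hbE, hdbE, hl2E, hni]
          ring), integral_cubic]
      rw [if_neg (d2 m)]
      ring
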